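/- Define operators T_r on ℚ[x] by T_r = (1/r!)·X^r ∘ D^r, where X is multiplication by x and D is d/dx. Then for all non-negative integers r, r' one has T_r ∘ T_{r'} = Σ_{i=0}^{min(r,r')} [(r+r'−i)!/(i!·(r−i)!·(r'−i)!)] · T_{r+r'−i}. -/

import Mathlib

open Polynomial Finset

/-- The operator T_r = (1/r!)·X^r ∘ D^r on ℚ[x]. -/
noncomputable def Tproj (r : ℕ) (p : Polynomial ℚ) : Polynomial ℚ :=
  ((r.factorial : ℚ))⁻¹ • (X ^ r * derivative^[r] p)

/-- T_r ∘ T_{r'} = Σ_{i=0}^{min(r,r')} [(r+r'−i)!/(i!·(r−i)!·(r'−i)!)] · T_{r+r'−i}. -/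
theorem Top_comp (r r' : ℕ) (p : Polynomial ℚ) :
    Tproj r (Tproj r' p) =
      ∑ i ∈ range (min r r' + 1),
        (((r + r' - i).factorial : ℚ) /
            ((i.factorial : ℚ) * ((r - i).factorial : ℚ) * ((r' - i).factorial : ℚ))) •
          Tproj (r + r' - i) p := by
  have f0 : ∀ n : ℕ, (n.factorial : ℚ) ≠ 0 := fun n => by
    exact_mod_cast n.factorial_ne_zero
  set g : ℕ → Polynomial ℚ := fun i =>
    (((r.choose i : ℚ) * (r'.descFactorial i : ℚ)) /
      ((r.factorial : ℚ) * (r'.factorial : ℚ))) •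
      (X ^ (r + r' - i) * derivative^[r + r' - i] p) with hg
  unfold Tproj
  rw [iterate_derivative_smul, mul_comm (X ^ r') (derivative^[r'] p),
    iterate_derivative_mul]
  simp_rw [iterate_derivative_X_pow_eq_smul, smul_sum, mul_sum, smul_sum]
  have lhs_eq : ∀ i ∈ range r.succ,
      ((r.factorial : ℚ))⁻¹ • (X ^ r * ((r'.factorial : ℚ))⁻¹ •
        r.choose i • (derivative^[r - i] (derivative^[r'] p) *
          (r'.descFactorial i : ℚ) • X ^ (r' - i))) = g i := by
    intro i hi
    simp only [mem_range] at hi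
    have hir : i ≤ r := by omega
    by_cases hir' : i ≤ r'
    · have e1 : derivative^[r - i] (derivative^[r'] p) = derivative^[r + r' - i] p := by
        rw [← Function.iterate_add_apply]; congr 1; omega
      have e2 : (X : Polynomial ℚ) ^ r * X ^ (r' - i) = X ^ (r + r' - i) := by
        rw [← pow_add]; congr 1; omega
      rw [e1, hg]
      simp only [← Nat.cast_smul_eq_nsmul ℚ, smul_smul, mul_smul_comm, smul_mul_assoc]
      rw [← e2, mul_assoc ((X : Polynomial ℚ) ^ r)]
      congr 1
      · field_simp
      · ring
    · have h0 : r'.descFactorial i = 0 := Nat.descFactorial_eq_zero_iff_lt.mpr (by omega)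
      simp [hg, h0]
  rw [Finset.sum_congr rfl lhs_eq]
  have rhs_eq : ∀ i ∈ range (min r r' + 1),
      (((r + r' - i).factorial : ℚ) /
          ((i.factorial : ℚ) * ((r - i).factorial : ℚ) * ((r' - i).factorial : ℚ))) •
        (((r + r' - i).factorial : ℚ))⁻¹ • (X ^ (r + r' - i) * derivative^[r + r' - i] p)
        = g i := by
    intro i hi
    simp only [mem_range] at hi
    have hir : i ≤ r := by omega
    have hir' : i ≤ r' := by omega
    rw [hg, smul_smul]
    congr 1
    have h1 : (r.choose i : ℚ) * i.factorial * (r - i).factorial = r.factorial := by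
      exact_mod_cast congrArg (Nat.cast : ℕ → ℚ) (Nat.choose_mul_factorial_mul_factorial hir)
    have h2 : ((r' - i).factorial : ℚ) * (r'.descFactorial i : ℚ) = r'.factorial := by
      exact_mod_cast congrArg (Nat.cast : ℕ → ℚ) (Nat.factorial_mul_descFactorial hir')
    have hc : (r.choose i : ℚ) ≠ 0 := by
      exact_mod_cast (Nat.choose_pos hir).ne'
    have hd : (r'.descFactorial i : ℚ) ≠ 0 := by
      have : r'.descFactorial i ≠ 0 := by
        simp only [ne_eq, Nat.descFactorial_eq_zero_iff_lt]; omega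
      exact_mod_cast this
    rw [← h1, ← h2]
    field_simp
  rw [Finset.sum_congr rfl rhs_eq]
  refine (Finset.sum_subset ?_ ?_).symm
  · intro i hi
    simp only [mem_range] at hi ⊢
    omega
  · intro k hk hk2
    simp only [mem_range] at hk hk2
    have h0 : r'.descFactorial k = 0 := Nat.descFactorial_eq_zero_iff_lt.mpr (by omega)
    simp [hg, h0]
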